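/- arXiv:2307.04191 — 3 statements merged into one kernel-verified Lean document; each statement's English description precedes it below -/
import Mathlib

section
/- In the logistic regression model with parameter θ* ∈ S^{d−1} and inverse temperature β > 0, the error rate of the homogeneous linear classifier h_{θ*} satisfies err_{θ*}(θ*) = P(y·xᵀθ* ≤ 0) ≤ (1/β)·√(2/π). -/
open MeasureTheory ProbabilityTheory Real

noncomputable def stdGaussian (d : ℕ) : Measure (EuclideanSpace ℝ (Fin d)) :=
  (Measure.pi fun _ : Fin d => gaussianReal 0 1).map (EuclideanSpace.equiv (Fin d) ℝ).symm

noncomputable def logistic (η : ℝ) : ℝ := 1 / (1 + Real.exp (-η))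

noncomputable def logisticModel (d : ℕ) (β : ℝ) (θ : EuclideanSpace ℝ (Fin d)) :
    Measure (EuclideanSpace ℝ (Fin d) × ℝ) :=
  (stdGaussian d).bind fun x =>
    ENNReal.ofReal (logistic (β * (inner ℝ x θ : ℝ))) • Measure.dirac (x, (1:ℝ))
      + ENNReal.ofReal (1 - logistic (β * (inner ℝ x θ : ℝ))) • Measure.dirac (x, (-1:ℝ))

lemma aux_lintegral_pi_prod : ∀ {n : ℕ} (f : Fin n → ℝ → ENNReal), (∀ i, Measurable (f i)) →
    ∫⁻ y : Fin n → ℝ, ∏ i, f i (y i) ∂(Measure.pi fun _ => (volume : Measure ℝ))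
      = ∏ i, ∫⁻ t, f i t := by
  intro n
  induction n with
  | zero =>
      intro f hf
      simp [lintegral_const, Measure.pi_of_empty]
  | succ n ih =>
      intro f hf
      have mp := (measurePreserving_piFinSuccAbove (fun _ : Fin (n+1) => (volume : Measure ℝ)) 0).symm
      have hF : Measurable fun y : Fin (n+1) → ℝ => ∏ i, f i (y i) :=
        Finset.measurable_prod _ fun i _ => (hf i).comp (measurable_pi_apply i)
      rw [← mp.lintegral_comp hF]
      have : ∀ z : ℝ × (Fin n → ℝ),
          (∏ i, f i (((MeasurableEquiv.piFinSuccAbove (fun _ => ℝ) 0).symm z) i))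
            = f 0 z.1 * ∏ i : Fin n, f i.succ (z.2 i) := by
        intro z
        simp only [MeasurableEquiv.piFinSuccAbove_symm_apply, Fin.insertNthEquiv,
          Equiv.coe_fn_mk, Fin.insertNth_zero]
        rw [Fin.prod_univ_succ]
        simp [Fin.zero_succAbove]
      simp only [Function.comp_def, this]
      have key := lintegral_prod_mul (μ := (volume : Measure ℝ))
        (ν := Measure.pi fun _ : Fin n => (volume : Measure ℝ)) (f := f 0)
        (g := fun y => ∏ i : Fin n, f i.succ (y i)) (hf 0).aemeasurable
        (Finset.measurable_prod _ fun i _ => (hf i.succ).comp (measurable_pi_apply i)).aemeasurable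
      rw [key, ih (fun i => f i.succ) (fun i => hf i.succ), Fin.prod_univ_succ]

lemma aux_pi_gaussian (d : ℕ) :
    (Measure.pi fun _ : Fin d => gaussianReal 0 1)
      = (Measure.pi fun _ : Fin d => (volume : Measure ℝ)).withDensity
          fun y => ∏ i, gaussianPDF 0 1 (y i) := by
  apply Measure.pi_eq
  intro s hs
  rw [withDensity_apply _ (MeasurableSet.univ_pi hs), ← lintegral_indicator (MeasurableSet.univ_pi hs)]
  have hind : (Set.indicator (Set.pi Set.univ s) fun y => ∏ i, gaussianPDF 0 1 (y i))
      = fun y : Fin d → ℝ => ∏ i, (s i).indicator (gaussianPDF 0 1) (y i) := by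
    funext y
    by_cases hy : y ∈ Set.pi Set.univ s
    · rw [Set.indicator_of_mem hy]
      exact Finset.prod_congr rfl fun i _ =>
        (Set.indicator_of_mem (hy i (Set.mem_univ i)) _).symm
    · rw [Set.indicator_of_notMem hy]
      simp only [Set.mem_pi, Set.mem_univ, forall_true_left] at hy
      push_neg at hy
      obtain ⟨i, hi⟩ := hy
      exact (Finset.prod_eq_zero (Finset.mem_univ i) (by rw [Set.indicator_of_notMem hi])).symm
  rw [hind, aux_lintegral_pi_prod _ fun i =>
    (measurable_gaussianPDF 0 1).indicator (hs i)]
  refine Finset.prod_congr rfl fun i _ => ?_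
  rw [lintegral_indicator (hs i), gaussianReal_of_var_ne_zero _ one_ne_zero,
    withDensity_apply _ (hs i)]

lemma aux_map_eval (d : ℕ) (i : Fin d) :
    (Measure.pi fun _ : Fin d => gaussianReal 0 1).map (fun y => y i) = gaussianReal 0 1 := by
  ext s hs
  rw [Measure.map_apply (measurable_pi_apply i) hs]
  have : (fun y : Fin d → ℝ => y i) ⁻¹' s
      = Set.pi Set.univ (Function.update (fun _ : Fin d => Set.univ) i s) := by
    ext y
    simp only [Set.mem_preimage, Set.mem_pi, Set.mem_univ, forall_true_left,
      Function.update_apply]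
    constructor
    · intro h j
      split
      · next hji => subst hji; exact h
      · exact Set.mem_univ _
    · intro h
      have := h i
      simpa using this
  rw [this, Measure.pi_pi]
  rw [Finset.prod_eq_single i (fun j _ hj => by simp [Function.update_apply, hj]) (by simp)]
  simp

lemma aux_map_withDensity {α β : Type*} [MeasurableSpace α] [MeasurableSpace β]
    (e : α ≃ᵐ β) (μ : Measure α) (ρ : β → ENNReal) (hρ : Measurable ρ) :
    (μ.withDensity (ρ ∘ e)).map e = (μ.map e).withDensity ρ := by
  ext s hs
  rw [Measure.map_apply e.measurable hs, withDensity_apply _ (e.measurable hs),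
    withDensity_apply _ hs, setLIntegral_map hs hρ e.measurable]
  rfl


noncomputable def gaussDensity (d : ℕ) : EuclideanSpace ℝ (Fin d) → ENNReal :=
  fun x => ENNReal.ofReal ((Real.sqrt (2 * π))⁻¹ ^ d * Real.exp (-‖x‖ ^ 2 / 2))

lemma gaussDensity_measurable (d : ℕ) : Measurable (gaussDensity d) := by
  apply ENNReal.measurable_ofReal.comp
  fun_prop

lemma aux_density_eq (d : ℕ) (y : Fin d → ℝ) :
    (∏ i, gaussianPDF 0 1 (y i))
      = gaussDensity d ((EuclideanSpace.equiv (Fin d) ℝ).symm y) := by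
  have h1 : ∀ i, gaussianPDF 0 1 (y i)
      = ENNReal.ofReal ((Real.sqrt (2 * π))⁻¹ * Real.exp (-(y i) ^ 2 / 2)) := by
    intro i
    rw [gaussianPDF_def, gaussianPDFReal_def]
    norm_num
  simp_rw [h1]
  rw [← ENNReal.ofReal_prod_of_nonneg (fun i _ => by positivity)]
  unfold gaussDensity
  congr 1
  have hnorm : ‖(EuclideanSpace.equiv (Fin d) ℝ).symm y‖ ^ 2 = ∑ i, (y i) ^ 2 := by
    rw [EuclideanSpace.norm_eq]
    rw [Real.sq_sqrt (by positivity)]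
    simp [Real.norm_eq_abs, sq_abs]
  rw [hnorm, Finset.prod_mul_distrib, Finset.prod_const, ← Real.exp_sum]
  congr 1
  · simp [Finset.card_univ]
  · rw [← Finset.sum_div, ← Finset.sum_neg_distrib]

lemma aux_stdGaussian_eq (d : ℕ) :
    stdGaussian d = (volume : Measure (EuclideanSpace ℝ (Fin d))).withDensity (gaussDensity d) := by
  have hcoe : ⇑(EuclideanSpace.equiv (Fin d) ℝ).symm
      = ⇑(MeasurableEquiv.toLp 2 (Fin d → ℝ)) := rfl
  rw [_root_.stdGaussian, hcoe, aux_pi_gaussian d]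
  have : (fun y : Fin d → ℝ => ∏ i, gaussianPDF 0 1 (y i))
      = gaussDensity d ∘ ⇑(MeasurableEquiv.toLp 2 (Fin d → ℝ)) := by
    funext y; exact aux_density_eq d y
  rw [this, aux_map_withDensity _ _ _ (gaussDensity_measurable d), ← MeasureTheory.volume_pi,
    (show MeasurePreserving (MeasurableEquiv.toLp 2 (Fin d → ℝ)) volume volume from
      MeasurePreserving.symm _ (EuclideanSpace.volume_preserving_symm_measurableEquiv_toLp (Fin d))).map_eq]

lemma aux_rotation (d : ℕ) (L : EuclideanSpace ℝ (Fin d) ≃ₗᵢ[ℝ] EuclideanSpace ℝ (Fin d)) :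
    (stdGaussian d).map L = stdGaussian d := by
  rw [aux_stdGaussian_eq]
  have hcoe : ⇑L = ⇑(L.toHomeomorph.toMeasurableEquiv) := rfl
  have hdens : gaussDensity d = gaussDensity d ∘ ⇑(L.toHomeomorph.toMeasurableEquiv) := by
    funext x
    simp only [Function.comp_apply, gaussDensity]
    have : ‖L.toHomeomorph.toMeasurableEquiv x‖ = ‖x‖ := L.norm_map x
    rw [this]
  rw [hcoe]
  conv_lhs => rw [hdens]
  rw [aux_map_withDensity _ _ _ (gaussDensity_measurable d)]
  congr 1
  exact L.measurePreserving.map_eq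

lemma aux_marginal (d : ℕ) (θ : EuclideanSpace ℝ (Fin d)) (hθ : ‖θ‖ = 1)
    (f : ℝ → ENNReal) (hf : Measurable f) :
    ∫⁻ x, f (inner ℝ x θ : ℝ) ∂(stdGaussian d) = ∫⁻ t, f t ∂(gaussianReal 0 1) := by
  have hd : Nonempty (Fin d) := by
    rcases Nat.eq_zero_or_pos d with h | h
    · subst h
      exfalso
      have : θ = 0 := Subsingleton.elim _ _
      rw [this, norm_zero] at hθ
      norm_num at hθ
    · exact ⟨⟨0, h⟩⟩
  obtain ⟨i0⟩ := hd
  set w : EuclideanSpace ℝ (Fin d) := EuclideanSpace.single i0 (1:ℝ) with hw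
  have hnw : ‖θ‖ = ‖w‖ := by
    rw [hθ, hw, EuclideanSpace.norm_single]
    norm_num
  set L : EuclideanSpace ℝ (Fin d) ≃ₗᵢ[ℝ] EuclideanSpace ℝ (Fin d) :=
    Submodule.reflection (Submodule.span ℝ {θ - w})ᗮ with hL
  have hLθ : L θ = w := Submodule.reflection_sub hnw
  have hinner : ∀ x : EuclideanSpace ℝ (Fin d), (inner ℝ x θ : ℝ) = (L x) i0 := by
    intro x
    have h1 : (inner ℝ (L x) (L θ) : ℝ) = inner ℝ x θ := L.inner_map_map x θ
    rw [← h1, hLθ, hw, EuclideanSpace.inner_single_right]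
    simp
  simp_rw [hinner]
  have hLmeas : Measurable (⇑L) := L.continuous.measurable
  have h2 : ∫⁻ x, f ((L x) i0) ∂(stdGaussian d) = ∫⁻ x, f (x i0) ∂((stdGaussian d).map L) := by
    rw [lintegral_map (f := fun x : EuclideanSpace ℝ (Fin d) => f (x i0)) (hf.comp (by fun_prop)) hLmeas]
  rw [h2, aux_rotation d L]
  have hcoe : ⇑(EuclideanSpace.equiv (Fin d) ℝ).symm
      = ⇑(MeasurableEquiv.toLp 2 (Fin d → ℝ)) := rfl
  rw [_root_.stdGaussian, hcoe, lintegral_map (f := fun x : EuclideanSpace ℝ (Fin d) => f (x i0))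
    (hf.comp (by fun_prop))
    (MeasurableEquiv.toLp 2 (Fin d → ℝ)).measurable]
  have h3 : ∀ y : Fin d → ℝ, ((MeasurableEquiv.toLp 2 (Fin d → ℝ)) y) i0 = y i0 :=
    fun _ => rfl
  simp_rw [h3]
  rw [← lintegral_map hf (measurable_pi_apply i0), aux_map_eval d i0]


lemma aux_logistic_le (v : ℝ) : logistic v ≤ (1/2) * Real.exp (v/2) := by
  unfold logistic
  have h1 : (0:ℝ) < 1 + Real.exp (-v) := by positivity
  rw [div_le_iff₀ h1]
  have e1 : Real.exp (v/4) * Real.exp (-(v/4)) = 1 := by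
    rw [← Real.exp_add]; norm_num
  have e2 : Real.exp (v/4) * Real.exp (v/4) = Real.exp (v/2) := by
    rw [← Real.exp_add]; ring_nf
  have e3 : Real.exp (-(v/4)) * Real.exp (-(v/4)) = Real.exp (-(v/2)) := by
    rw [← Real.exp_add]; ring_nf
  have e4 : Real.exp (v/2) * Real.exp (-v) = Real.exp (-(v/2)) := by
    rw [← Real.exp_add]; ring_nf
  nlinarith [two_mul_le_add_sq (Real.exp (v/4)) (Real.exp (-(v/4))),
    Real.exp_pos (v/2), Real.exp_pos (-(v/2))]

lemma aux_one_sub_logistic (v : ℝ) : 1 - logistic v = logistic (-v) := by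
  unfold logistic
  rw [neg_neg, Real.exp_neg]
  have hE : (0:ℝ) < Real.exp v := Real.exp_pos v
  have h1 : (0:ℝ) < 1 + (Real.exp v)⁻¹ := by positivity
  have h2 : (0:ℝ) < 1 + Real.exp v := by positivity
  field_simp
  ring

noncomputable def Kfun (β : ℝ) : ℝ → ENNReal := fun t =>
  (Set.Iic (0:ℝ)).indicator (fun t => ENNReal.ofReal ((1/2) * Real.exp (β*t/2))) t
    + (Set.Ici (0:ℝ)).indicator (fun t => ENNReal.ofReal ((1/2) * Real.exp (-(β*t)/2))) t

lemma Kfun_measurable (β : ℝ) : Measurable (Kfun β) := by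
  apply Measurable.add
  · exact (ENNReal.measurable_ofReal.comp (by fun_prop)).indicator measurableSet_Iic
  · exact (ENNReal.measurable_ofReal.comp (by fun_prop)).indicator measurableSet_Ici

lemma aux_pointwise (β t : ℝ) :
    ENNReal.ofReal (logistic (β*t)) * (if t ≤ 0 then 1 else 0)
        + ENNReal.ofReal (1 - logistic (β*t)) * (if 0 ≤ t then 1 else 0)
      ≤ Kfun β t := by
  unfold Kfun
  rcases lt_trichotomy t 0 with ht | ht | ht
  · rw [if_pos ht.le, if_neg (not_le.mpr ht), Set.indicator_of_mem (Set.mem_Iic.mpr ht.le),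
      Set.indicator_of_notMem (by simpa using ht)]
    simp only [mul_one, mul_zero, add_zero]
    exact ENNReal.ofReal_le_ofReal (by simpa [mul_div_assoc] using aux_logistic_le (β*t))
  · subst ht
    rw [Set.indicator_of_mem (Set.mem_Iic.mpr le_rfl),
      Set.indicator_of_mem (Set.mem_Ici.mpr le_rfl)]
    simp only [le_refl, if_true, mul_one]
    refine add_le_add (ENNReal.ofReal_le_ofReal ?_) (ENNReal.ofReal_le_ofReal ?_)
    · simpa [mul_div_assoc] using aux_logistic_le 0
    · rw [aux_one_sub_logistic]
      simpa using aux_logistic_le 0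
  · rw [if_neg (not_le.mpr ht), if_pos ht.le, Set.indicator_of_notMem (by simpa using ht),
      Set.indicator_of_mem (Set.mem_Ici.mpr ht.le)]
    simp only [mul_one, mul_zero, zero_add]
    refine ENNReal.ofReal_le_ofReal ?_
    rw [aux_one_sub_logistic]
    have := aux_logistic_le (-(β*t))
    simpa [neg_div, mul_div_assoc] using this

lemma aux_half_int (β : ℝ) (hβ : 0 < β) :
    ∫⁻ t in Set.Ici (0:ℝ), ENNReal.ofReal ((1/2) * Real.exp (-(β/2) * t))
      = ENNReal.ofReal (1/β) := by
  rw [← Measure.restrict_congr_set (Ioi_ae_eq_Ici (a := (0:ℝ)))]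
  have hb2 : (0:ℝ) < β/2 := by positivity
  have hint : IntegrableOn (fun t : ℝ => (1/2) * Real.exp (-(β/2) * t)) (Set.Ioi 0) :=
    (exp_neg_integrableOn_Ioi 0 hb2).const_mul _
  rw [← ofReal_integral_eq_lintegral_ofReal hint
    (Filter.Eventually.of_forall fun t => by positivity)]
  congr 1
  rw [MeasureTheory.integral_const_mul]
  have h1 : ∫ x in Set.Ioi (0:ℝ), Real.exp (-(β/2 * x)) = (β/2)⁻¹ • ∫ x in Set.Ioi (β/2 * 0), Real.exp (-x) :=
    integral_comp_mul_left_Ioi (fun x => Real.exp (-x)) 0 hb2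
  simp only [mul_zero, integral_exp_neg_Ioi, neg_zero, Real.exp_zero, smul_eq_mul, mul_one] at h1
  have h2 : (fun x : ℝ => Real.exp (-(β/2) * x)) = fun x : ℝ => Real.exp (-(β/2 * x)) := by
    funext x; ring_nf
  rw [h2, h1]
  field_simp

lemma aux_oneD (β : ℝ) (hβ : 0 < β) :
    ∫⁻ t, Kfun β t ∂(gaussianReal 0 1) ≤ ENNReal.ofReal ((1/β) * Real.sqrt (2/π)) := by
  have hpdf : ∀ t : ℝ, gaussianPDF 0 1 t ≤ ENNReal.ofReal ((Real.sqrt (2*π))⁻¹) := by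
    intro t
    rw [gaussianPDF_def]
    apply ENNReal.ofReal_le_ofReal
    rw [gaussianPDFReal_def]
    simp only [NNReal.coe_one, mul_one, sub_zero]
    have h1 : Real.exp (-t^2/(2:ℝ)) ≤ 1 := by
      rw [← Real.exp_zero]
      exact Real.exp_le_exp.mpr (by nlinarith [sq_nonneg t])
    calc (Real.sqrt (2*π))⁻¹ * Real.exp (-t^2/2) ≤ (Real.sqrt (2*π))⁻¹ * 1 := by
          exact mul_le_mul_of_nonneg_left h1 (by positivity)
      _ = (Real.sqrt (2*π))⁻¹ := mul_one _
  rw [gaussianReal_of_var_ne_zero _ one_ne_zero,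
    lintegral_withDensity_eq_lintegral_mul _ (measurable_gaussianPDF 0 1) (Kfun_measurable β)]
  have step1 : ∫⁻ t, (gaussianPDF 0 1 * Kfun β) t
      ≤ ∫⁻ t, ENNReal.ofReal ((Real.sqrt (2*π))⁻¹) * Kfun β t := by
    refine lintegral_mono fun t => ?_
    exact mul_le_mul_left (hpdf t) _
  refine le_trans step1 ?_
  rw [lintegral_const_mul _ (Kfun_measurable β)]
  have hm1 : Measurable fun t : ℝ =>
      (Set.Iic (0:ℝ)).indicator (fun t => ENNReal.ofReal ((1/2) * Real.exp (β*t/2))) t :=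
    (ENNReal.measurable_ofReal.comp (by fun_prop)).indicator measurableSet_Iic
  have hK : ∫⁻ t, Kfun β t = ENNReal.ofReal (1/β) + ENNReal.ofReal (1/β) := by
    unfold Kfun
    rw [lintegral_add_left hm1]
    have hneg : ∫⁻ t, (Set.Iic (0:ℝ)).indicator
        (fun t => ENNReal.ofReal ((1/2) * Real.exp (β*t/2))) t
        = ∫⁻ t, (Set.Ici (0:ℝ)).indicator
            (fun t => ENNReal.ofReal ((1/2) * Real.exp (-(β/2) * t))) t := by
      rw [← (Measure.measurePreserving_neg (volume : Measure ℝ)).lintegral_comp hm1]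
      congr 1
      funext t
      by_cases h : (0:ℝ) ≤ t
      · rw [Set.indicator_of_mem (by simpa using h), Set.indicator_of_mem (Set.mem_Ici.mpr h)]
        congr 2
        ring
      · rw [Set.indicator_of_notMem (by simpa using h),
          Set.indicator_of_notMem (by simpa using h)]
    rw [hneg, lintegral_indicator measurableSet_Ici, lintegral_indicator measurableSet_Ici,
      aux_half_int β hβ]
    congr 1
    rw [← aux_half_int β hβ]
    congr 1
    funext t
    congr 2
    ring
  rw [hK, ← ENNReal.ofReal_add (by positivity) (by positivity),
    ← ENNReal.ofReal_mul (by positivity)]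
  apply ENNReal.ofReal_le_ofReal
  have hs2 : (0:ℝ) < Real.sqrt (2*π) := Real.sqrt_pos.mpr (by positivity)
  have hsq : Real.sqrt (2/π) * Real.sqrt (2*π) = 2 := by
    rw [← Real.sqrt_mul (by positivity)]
    rw [show (2/π) * (2*π) = 4 by field_simp; ring]
    rw [show (4:ℝ) = 2^2 by norm_num, Real.sqrt_sq (by norm_num)]
  have h2 : Real.sqrt (2/π) = 2 / Real.sqrt (2*π) := by
    rw [eq_div_iff (ne_of_gt hs2)]
    exact hsq
  rw [h2]
  field_simp
  exact le_of_eq (by ring)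



/-- Error rate of the Bayes-optimal homogeneous linear classifier (Lemma 4):
err_{θ*}(θ*) = P(y·xᵀθ* ≤ 0) ≤ (1/β)·√(2/π). -/
theorem stmt5 (d : ℕ) (β : ℝ) (hβ : 0 < β)
    (θstar : EuclideanSpace ℝ (Fin d)) (hθstar : ‖θstar‖ = 1) :
    logisticModel d β θstar {p | p.2 * (inner ℝ p.1 θstar : ℝ) ≤ 0}
      ≤ ENNReal.ofReal ((1 / β) * Real.sqrt (2 / π)) := by
  set S : Set (EuclideanSpace ℝ (Fin d) × ℝ) := {p | p.2 * (inner ℝ p.1 θstar : ℝ) ≤ 0} with hSdef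
  have hcont : Continuous fun p : EuclideanSpace ℝ (Fin d) × ℝ => p.2 * (inner ℝ p.1 θstar : ℝ) :=
    continuous_snd.mul (Continuous.inner continuous_fst continuous_const)
  have hS : MeasurableSet S := measurableSet_le hcont.measurable measurable_const
  have hmeasi : Measurable fun x : EuclideanSpace ℝ (Fin d) => (inner ℝ x θstar : ℝ) :=
    (Continuous.inner continuous_id continuous_const).measurable
  have hlogcont : Continuous logistic := by
    unfold logistic
    exact continuous_const.div (continuous_const.add (Real.continuous_exp.comp continuous_neg))
      (fun x => by positivity)
  have hker : Measurable (fun x : EuclideanSpace ℝ (Fin d) =>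
      ENNReal.ofReal (logistic (β * (inner ℝ x θstar : ℝ))) • Measure.dirac (x, (1:ℝ))
        + ENNReal.ofReal (1 - logistic (β * (inner ℝ x θstar : ℝ))) • Measure.dirac (x, (-1:ℝ))) := by
    apply Measure.measurable_of_measurable_coe
    intro s hs
    simp only [Measure.coe_add, Pi.add_apply, Measure.smul_apply, smul_eq_mul,
      Measure.dirac_apply' _ hs]
    have hind : ∀ c : ℝ, Measurable fun x : EuclideanSpace ℝ (Fin d) =>
        s.indicator (1 : EuclideanSpace ℝ (Fin d) × ℝ → ENNReal) (x, c) := by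
      intro c
      have h1 : (fun x : EuclideanSpace ℝ (Fin d) => s.indicator (1 : EuclideanSpace ℝ (Fin d) × ℝ → ENNReal) (x, c))
          = ((fun x : EuclideanSpace ℝ (Fin d) => (x, c)) ⁻¹' s).indicator 1 := by
        funext x
        by_cases h : (x, c) ∈ s <;> simp [Set.indicator_apply, h]
      rw [h1]
      exact measurable_one.indicator (hs.preimage (measurable_id.prodMk measurable_const))
    refine Measurable.add (Measurable.mul ?_ (hind 1)) (Measurable.mul ?_ (hind (-1)))
    · exact ENNReal.measurable_ofReal.comp
        ((hlogcont.measurable).comp (hmeasi.const_mul β))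
    · exact ENNReal.measurable_ofReal.comp
        ((measurable_const.sub ((hlogcont.measurable).comp (hmeasi.const_mul β))))
  unfold logisticModel
  rw [ Measure.bind_apply hS hker.aemeasurable]
  have hev : ∀ x : EuclideanSpace ℝ (Fin d),
      (ENNReal.ofReal (logistic (β * (inner ℝ x θstar : ℝ))) • Measure.dirac (x, (1:ℝ))
        + ENNReal.ofReal (1 - logistic (β * (inner ℝ x θstar : ℝ))) • Measure.dirac (x, (-1:ℝ))) S
      = ENNReal.ofReal (logistic (β * (inner ℝ x θstar : ℝ)))
          * (if (inner ℝ x θstar : ℝ) ≤ 0 then 1 else 0)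
        + ENNReal.ofReal (1 - logistic (β * (inner ℝ x θstar : ℝ)))
          * (if 0 ≤ (inner ℝ x θstar : ℝ) then 1 else 0) := by
    intro x
    simp only [Measure.coe_add, Pi.add_apply, Measure.smul_apply, smul_eq_mul,
      Measure.dirac_apply' _ hS]
    have h1 : S.indicator (1 : EuclideanSpace ℝ (Fin d) × ℝ → ENNReal) (x, (1:ℝ))
        = (if (inner ℝ x θstar : ℝ) ≤ 0 then 1 else 0) := by
      simp [Set.indicator_apply, hSdef]
    have h2 : S.indicator (1 : EuclideanSpace ℝ (Fin d) × ℝ → ENNReal) (x, (-1:ℝ))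
        = (if 0 ≤ (inner ℝ x θstar : ℝ) then 1 else 0) := by
      simp [Set.indicator_apply, hSdef, neg_nonpos]
    rw [h1, h2]
  simp_rw [hev]
  calc ∫⁻ x, (ENNReal.ofReal (logistic (β * (inner ℝ x θstar : ℝ)))
          * (if (inner ℝ x θstar : ℝ) ≤ 0 then 1 else 0)
        + ENNReal.ofReal (1 - logistic (β * (inner ℝ x θstar : ℝ)))
          * (if 0 ≤ (inner ℝ x θstar : ℝ) then 1 else 0)) ∂(stdGaussian d)
      ≤ ∫⁻ x, Kfun β (inner ℝ x θstar : ℝ) ∂(stdGaussian d) :=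
        lintegral_mono fun x => aux_pointwise β _
    _ = ∫⁻ t, Kfun β t ∂(gaussianReal 0 1) :=
        aux_marginal d θstar hθstar (Kfun β) (Kfun_measurable β)
    _ ≤ ENNReal.ofReal ((1 / β) * Real.sqrt (2 / π)) := aux_oneD β hβ
end

section
/- Let z and z' be standard normal random variables with correlation ρ ∈ [−1,1], and let β > 0. Then E[ KL( Bernoulli(g'(βz)) ‖ Bernoulli(g'(βz')) ) ] = β²·(1−ρ)·E[ g''(βz) ], where g''(η) = 1/((1+e^{η})(1+e^{−η})) is the second derivative of the log partition function g(η) = ln(1+e^{η}). -/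
open MeasureTheory ProbabilityTheory Real

/-- Second derivative of the log partition function `g(η) = ln(1 + e^η)`. -/
noncomputable def logPartition'' (η : ℝ) : ℝ :=
  1 / ((1 + Real.exp η) * (1 + Real.exp (-η)))

/-- Kullback–Leibler divergence between Bernoulli distributions (on {-1,1}) with
mean parameters p and q. -/
noncomputable def klBernoulli (p q : ℝ) : ℝ :=
  p * Real.log (p / q) + (1 - p) * Real.log ((1 - p) / (1 - q))

section Aux

open Filter
open scoped NNReal ENNReal

/-! ### Elementary facts about the logistic function and the log-partition function -/

/-- The log-partition function `g(η) = log (1 + e^η)`. -/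
noncomputable def Gfun (η : ℝ) : ℝ := Real.log (1 + Real.exp η)

lemma one_add_exp_pos (x : ℝ) : (0:ℝ) < 1 + Real.exp x := by positivity

lemma logistic_pos (a : ℝ) : 0 < logistic a := by
  unfold logistic; positivity

lemma logistic_le_one (a : ℝ) : logistic a ≤ 1 := by
  unfold logistic
  rw [div_le_one (one_add_exp_pos _)]
  nlinarith [Real.exp_pos (-a)]

lemma one_sub_logistic (a : ℝ) : 1 - logistic a = logistic (-a) := by
  unfold logistic
  rw [neg_neg]
  have h1 := one_add_exp_pos (-a); have h2 := one_add_exp_pos a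
  have he : Real.exp (-a) * Real.exp a = 1 := by rw [← Real.exp_add]; simp
  field_simp
  nlinarith [he]

lemma Gfun_nonneg (a : ℝ) : 0 ≤ Gfun a := by
  unfold Gfun
  apply Real.log_nonneg; nlinarith [Real.exp_pos a]

lemma log_one_add_exp_neg (a : ℝ) : Real.log (1 + Real.exp (-a)) = Gfun a - a := by
  have : 1 + Real.exp (-a) = Real.exp (-a) * (1 + Real.exp a) := by
    rw [mul_add, mul_one, ← Real.exp_add]; simp [add_comm]
  rw [this, Real.log_mul (Real.exp_ne_zero _) (ne_of_gt (one_add_exp_pos a)), Real.log_exp]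
  unfold Gfun; ring

lemma log_logistic (a : ℝ) : Real.log (logistic a) = a - Gfun a := by
  unfold logistic
  rw [one_div, Real.log_inv, log_one_add_exp_neg]; ring

lemma log_one_sub_logistic (a : ℝ) : Real.log (1 - logistic a) = - Gfun a := by
  rw [one_sub_logistic, log_logistic]
  have : Gfun (-a) = Gfun a - a := by
    unfold Gfun; exact log_one_add_exp_neg a
  rw [this]; ring

/-- The Bregman-divergence form of the KL divergence between Bernoulli distributions with
natural parameters `a` and `b`. -/
lemma kl_eq (a b : ℝ) :
    klBernoulli (logistic a) (logistic b) = Gfun b - Gfun a + logistic a * (a - b) := by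
  unfold klBernoulli
  rw [Real.log_div (ne_of_gt (logistic_pos a)) (ne_of_gt (logistic_pos b)),
    Real.log_div (by rw [one_sub_logistic]; exact ne_of_gt (logistic_pos _))
      (by rw [one_sub_logistic]; exact ne_of_gt (logistic_pos _)),
    log_logistic, log_logistic, log_one_sub_logistic, log_one_sub_logistic]
  ring

lemma hasDerivAt_logistic (a : ℝ) : HasDerivAt logistic (logPartition'' a) a := by
  have h1 : HasDerivAt (fun x : ℝ => 1 + Real.exp (-x)) (-Real.exp (-a)) a := by
    have := ((hasDerivAt_id a).neg.exp).const_add 1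
    simpa using this
  have h2 := h1.inv (ne_of_gt (one_add_exp_pos (-a)))
  have : logistic = fun x : ℝ => (1 + Real.exp (-x))⁻¹ := by
    funext x; simp [logistic, one_div]
  rw [this]
  refine h2.congr_deriv ?_
  symm
  unfold logPartition''
  have he : Real.exp (-a) * Real.exp a = 1 := by rw [← Real.exp_add]; simp
  have h3 := one_add_exp_pos (-a); have h4 := one_add_exp_pos a
  field_simp
  nlinarith [he]

lemma Gfun_le (a : ℝ) : Gfun a ≤ Real.log 2 + |a| := by
  unfold Gfun
  have h1 : 1 + Real.exp a ≤ 2 * Real.exp |a| := by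
    have : Real.exp a ≤ Real.exp |a| := Real.exp_le_exp.2 (le_abs_self a)
    have : (1:ℝ) ≤ Real.exp |a| := by
      rw [← Real.exp_zero]; exact Real.exp_le_exp.2 (abs_nonneg a)
    nlinarith [Real.exp_le_exp.2 (le_abs_self a)]
  calc Real.log (1 + Real.exp a) ≤ Real.log (2 * Real.exp |a|) :=
        Real.log_le_log (by positivity) h1
    _ = Real.log 2 + |a| := by rw [Real.log_mul (by norm_num) (Real.exp_ne_zero _), Real.log_exp]

lemma logPartition''_nonneg (a : ℝ) : 0 ≤ logPartition'' a := by
  unfold logPartition''; positivity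

lemma logPartition''_le_one (a : ℝ) : logPartition'' a ≤ 1 := by
  unfold logPartition''
  rw [div_le_one (by positivity)]
  nlinarith [Real.exp_pos a, Real.exp_pos (-a)]

lemma continuous_logistic : Continuous logistic := by
  unfold logistic
  exact continuous_const.div (by continuity) (fun x => ne_of_gt (one_add_exp_pos (-x)))

lemma continuous_Gfun : Continuous Gfun := by
  unfold Gfun
  exact (continuous_const.add Real.continuous_exp).log (fun x => ne_of_gt (one_add_exp_pos x))

lemma continuous_logPartition'' : Continuous logPartition'' := by
  unfold logPartition''
  exact continuous_const.div (by continuity) (fun x => by positivity)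

/-! ### The standard Gaussian measure and its density -/

local notation "γ" => gaussianReal 0 1

/-- The density of the standard Gaussian. -/
noncomputable def pdfR (x : ℝ) : ℝ := gaussianPDFReal 0 1 x

lemma pdfR_eq (x : ℝ) : pdfR x = (Real.sqrt (2 * π))⁻¹ * Real.exp (-x^2/2) := by
  simp [pdfR, gaussianPDFReal]

lemma pdfR_nonneg (x : ℝ) : 0 ≤ pdfR x := gaussianPDFReal_nonneg 0 1 x

lemma measurable_pdfR : Measurable pdfR := measurable_gaussianPDFReal 0 1

lemma integrable_pdfR : Integrable pdfR volume := integrable_gaussianPDFReal 0 1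

lemma continuous_pdfR : Continuous pdfR := by
  have : pdfR = fun x => (Real.sqrt (2 * π))⁻¹ * Real.exp (-x^2/2) := funext pdfR_eq
  rw [this]; continuity

lemma gauss_eq_withDensity : γ = volume.withDensity (fun x => ENNReal.ofReal (pdfR x)) := by
  rw [gaussianReal_of_var_ne_zero 0 one_ne_zero]; rfl

lemma integral_gauss (g : ℝ → ℝ) : ∫ x, g x ∂γ = ∫ x, pdfR x * g x := by
  rw [gaussianReal_of_var_ne_zero 0 one_ne_zero]
  have h : gaussianPDF 0 1 = (fun x => ((Real.toNNReal (pdfR x) : ℝ≥0) : ℝ≥0∞)) := rfl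
  rw [h, integral_withDensity_eq_integral_smul measurable_pdfR.real_toNNReal]
  congr 1; funext x
  simp [NNReal.smul_def, Real.coe_toNNReal _ (pdfR_nonneg x)]

lemma lintegral_gauss (f : ℝ → ℝ≥0∞) (hf : Measurable f) :
    ∫⁻ x, f x ∂γ = ∫⁻ x, ENNReal.ofReal (pdfR x) * f x := by
  rw [gauss_eq_withDensity,
    lintegral_withDensity_eq_lintegral_mul _ measurable_pdfR.ennreal_ofReal hf]
  rfl

lemma integrable_gauss_iff (g : ℝ → ℝ) :
    Integrable g γ ↔ Integrable (fun x => g x * pdfR x) volume := by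
  rw [gauss_eq_withDensity]
  rw [integrable_withDensity_iff measurable_pdfR.ennreal_ofReal
    (Filter.Eventually.of_forall fun x => ENNReal.ofReal_lt_top)]
  have : ∀ x, (ENNReal.ofReal (pdfR x)).toReal = pdfR x := fun x =>
    ENNReal.toReal_ofReal (pdfR_nonneg x)
  simp_rw [this]

lemma integrable_mul_pdfR : Integrable (fun x : ℝ => x * pdfR x) volume := by
  have h : Integrable (fun x : ℝ => x * Real.exp (-(1/2) * x^2)) volume :=
    integrable_mul_exp_neg_mul_sq (by norm_num)
  have h2 := h.const_mul ((Real.sqrt (2*π))⁻¹)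
  refine h2.congr (Filter.Eventually.of_forall fun x => ?_)
  simp only [pdfR_eq]
  rw [show -x^2/2 = -(1/2) * x^2 by ring]
  ring

lemma integrable_id_gauss : Integrable (fun z : ℝ => z) γ := by
  rw [integrable_gauss_iff]
  exact integrable_mul_pdfR

lemma integrable_abs_gauss : Integrable (fun z : ℝ => |z|) γ := integrable_id_gauss.abs

lemma integral_id_gauss : ∫ z, z ∂γ = 0 := by
  have hmap : Measure.map (fun x : ℝ => (-1 : ℝ) * x) γ = γ := by
    rw [gaussianReal_map_const_mul (-1)]
    norm_num
  have h1 : ∫ z, z ∂γ = ∫ z, (-1 : ℝ) * z ∂γ := by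
    conv_lhs => rw [← hmap]
    exact integral_map (measurable_id.const_mul _).aemeasurable measurable_id.aestronglyMeasurable
  have h2 : ∫ z, (-1:ℝ) * z ∂γ = - ∫ z, z ∂γ := by
    simp only [neg_one_mul]
    exact integral_neg _
  linarith [h1, h2]

/-! ### Rotation invariance of the two-dimensional standard Gaussian -/

lemma pdf_rot {ρ s : ℝ} (hs : 0 < s) (h1 : ρ^2 + s^2 = 1) (x u : ℝ) :
    s⁻¹ * (pdfR x * pdfR ((u - ρ*x)/s))
      = pdfR u * gaussianPDFReal (ρ*u) ⟨s^2, sq_nonneg s⟩ x := by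
  rw [pdfR_eq, pdfR_eq, pdfR_eq]; unfold gaussianPDFReal
  show _ = _ * ((Real.sqrt (2*π*s^2))⁻¹ * Real.exp (-(x - ρ*u)^2/(2*s^2)))
  have hsq : Real.sqrt (2*π*s^2) = Real.sqrt (2*π) * s := by
    rw [Real.sqrt_mul (by positivity), Real.sqrt_sq hs.le]
  have he : (-x^2/2) + (-((u - ρ*x)/s)^2/2) = (-u^2/2) + (-(x - ρ*u)^2/(2*s^2)) := by
    field_simp
    linear_combination (u^2 - x^2) * h1
  calc s⁻¹ * ((Real.sqrt (2*π))⁻¹ * Real.exp (-x^2/2) *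
          ((Real.sqrt (2*π))⁻¹ * Real.exp (-((u - ρ*x)/s)^2/2)))
      = (Real.sqrt (2*π))⁻¹ * (Real.sqrt (2*π))⁻¹ * s⁻¹ *
          Real.exp ((-x^2/2) + (-((u - ρ*x)/s)^2/2)) := by rw [Real.exp_add]; ring
    _ = (Real.sqrt (2*π))⁻¹ * (Real.sqrt (2*π))⁻¹ * s⁻¹ *
          Real.exp ((-u^2/2) + (-(x - ρ*u)^2/(2*s^2))) := by rw [he]
    _ = (Real.sqrt (2*π))⁻¹ * Real.exp (-u^2/2) *
          ((Real.sqrt (2*π*s^2))⁻¹ * Real.exp (-(x - ρ*u)^2/(2*s^2))) := by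
        rw [Real.exp_add, hsq, mul_inv]; ring

lemma lint_rot {ρ s : ℝ} (hs : 0 < s) (h1 : ρ^2 + s^2 = 1) (f : ℝ → ℝ≥0∞)
    (hf : Measurable f) :
    ∫⁻ p : ℝ × ℝ, f (ρ*p.1 + s*p.2) ∂(Measure.prod γ γ) = ∫⁻ z, f z ∂γ := by
  have hm : Measurable fun p : ℝ × ℝ => f (ρ*p.1 + s*p.2) := hf.comp (by fun_prop)
  rw [lintegral_prod _ hm.aemeasurable]
  have inner : ∀ x : ℝ, ∫⁻ y, f (ρ*x + s*y) ∂γ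
      = ENNReal.ofReal s⁻¹ * ∫⁻ u, ENNReal.ofReal (pdfR ((u - ρ*x)/s)) * f u := by
    intro x
    rw [lintegral_gauss (fun y => f (ρ*x + s*y)) (hf.comp (by fun_prop))]
    have hH : Measurable fun u => ENNReal.ofReal (pdfR ((u - ρ*x)/s)) * f u :=
      ((measurable_pdfR.comp (by fun_prop)).ennreal_ofReal).mul hf
    have hptw : ∀ y : ℝ, ENNReal.ofReal (pdfR y) * f (ρ*x + s*y)
        = (fun u => ENNReal.ofReal (pdfR ((u - ρ*x)/s)) * f u) (ρ*x + s*y) := by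
      intro y
      have : (ρ*x + s*y - ρ*x)/s = y := by field_simp; ring
      simp only [this]
    simp_rw [hptw]
    have hmap : Measure.map (fun y : ℝ => ρ*x + s*y) volume
        = ENNReal.ofReal |s⁻¹| • volume := by
      have hco : (fun y : ℝ => ρ*x + s*y) = (fun u => ρ*x + u) ∘ (fun y => s*y) := rfl
      rw [hco, ← Measure.map_map (measurable_const_add _) (measurable_id'.const_mul _),
        Real.map_volume_mul_left hs.ne', Measure.map_smul,
        map_add_left_eq_self volume (ρ*x)]
    rw [← lintegral_map hH (by fun_prop), hmap, lintegral_smul_measure]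
    congr 1
    rw [abs_of_pos (by positivity)]
  simp_rw [inner]
  rw [lintegral_const_mul' _ _ ENNReal.ofReal_ne_top]
  rw [lintegral_lintegral_swap]
  swap
  · exact ((measurable_pdfR.comp (by fun_prop)).ennreal_ofReal.mul
      (hf.comp measurable_snd)).aemeasurable
  have key : ∀ u : ℝ, ENNReal.ofReal s⁻¹ * ∫⁻ x, ENNReal.ofReal (pdfR ((u - ρ*x)/s)) ∂γ
      = ENNReal.ofReal (pdfR u) := by
    intro u
    have hmx : Measurable fun x : ℝ => ENNReal.ofReal (pdfR ((u - ρ*x)/s)) :=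
      (measurable_pdfR.comp (by fun_prop)).ennreal_ofReal
    rw [lintegral_gauss (fun x => ENNReal.ofReal (pdfR ((u - ρ*x)/s))) hmx]
    rw [← lintegral_const_mul' _ _ ENNReal.ofReal_ne_top]
    have : ∀ x : ℝ, ENNReal.ofReal s⁻¹ * (ENNReal.ofReal (pdfR x) *
        ENNReal.ofReal (pdfR ((u - ρ*x)/s)))
        = ENNReal.ofReal (pdfR u) *
            ENNReal.ofReal (gaussianPDFReal (ρ*u) ⟨s^2, sq_nonneg s⟩ x) := by
      intro x
      rw [← ENNReal.ofReal_mul (pdfR_nonneg x), ← ENNReal.ofReal_mul (by positivity),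
        pdf_rot hs h1, ENNReal.ofReal_mul (pdfR_nonneg u)]
    simp_rw [this]
    rw [lintegral_const_mul' _ _ ENNReal.ofReal_ne_top]
    have hv : (⟨s^2, sq_nonneg s⟩ : ℝ≥0) ≠ 0 := by
      intro h
      have := congrArg NNReal.toReal h
      change s^2 = (0:ℝ) at this
      exact hs.ne' (by nlinarith)
    rw [lintegral_gaussianPDFReal_eq_one (ρ*u) hv, mul_one]
  calc ENNReal.ofReal s⁻¹ * ∫⁻ u, ∫⁻ x, ENNReal.ofReal (pdfR ((u - ρ*x)/s)) * f u ∂γ ∂volume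
      = ∫⁻ u, ENNReal.ofReal s⁻¹ * ∫⁻ x, ENNReal.ofReal (pdfR ((u - ρ*x)/s)) * f u ∂γ ∂volume := by
        rw [lintegral_const_mul' _ _ ENNReal.ofReal_ne_top]
    _ = ∫⁻ u, ENNReal.ofReal (pdfR u) * f u ∂volume := by
        apply lintegral_congr
        intro u
        have hmx : Measurable fun x : ℝ => ENNReal.ofReal (pdfR ((u - ρ*x)/s)) :=
          (measurable_pdfR.comp (by fun_prop)).ennreal_ofReal
        rw [lintegral_mul_const (f u) hmx, ← mul_assoc, key u]
    _ = ∫⁻ z, f z ∂γ := (lintegral_gauss f hf).symm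

/-- Rotation invariance for lower integrals, all `ρ ∈ [-1,1]`. -/
lemma lint_rot' {ρ : ℝ} (hρ : ρ ∈ Set.Icc (-1:ℝ) 1) (f : ℝ → ℝ≥0∞) (hf : Measurable f) :
    ∫⁻ p : ℝ × ℝ, f (ρ*p.1 + Real.sqrt (1 - ρ^2)*p.2) ∂(Measure.prod γ γ)
      = ∫⁻ z, f z ∂γ := by
  obtain ⟨hρ1, hρ2⟩ := hρ
  rcases lt_or_ge (ρ^2) 1 with h | h
  · have hs : 0 < Real.sqrt (1 - ρ^2) := Real.sqrt_pos.2 (by linarith)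
    have h1 : ρ^2 + (Real.sqrt (1 - ρ^2))^2 = 1 := by
      rw [Real.sq_sqrt (by linarith)]; ring
    exact lint_rot hs h1 f hf
  · have hρsq : ρ^2 = 1 := le_antisymm (by nlinarith) h
    have hs0 : Real.sqrt (1 - ρ^2) = 0 := by rw [hρsq]; simp
    rw [hs0]
    simp only [zero_mul, add_zero]
    have hmap : Measure.map (fun x : ℝ => ρ * x) γ = γ := by
      rw [gaussianReal_map_const_mul ρ]
      have : (⟨ρ^2, sq_nonneg ρ⟩ : ℝ≥0) = 1 := by
        ext; simp [hρsq]
      rw [mul_zero]; congr 1; ext; simp [hρsq]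
    have hmm : Measurable fun p : ℝ × ℝ => f (ρ * p.1) :=
      (hf.comp (measurable_id.const_mul ρ)).comp measurable_fst
    rw [lintegral_prod _ hmm.aemeasurable]
    simp only [lintegral_const, measure_univ, mul_one]
    conv_rhs => rw [← hmap]
    rw [lintegral_map hf (by fun_prop : Measurable fun x : ℝ => ρ * x)]

/-- Rotation invariance for Bochner integrals of nonnegative integrable functions,
including the integrability of the rotated function. -/
lemma int_rot {ρ : ℝ} (hρ : ρ ∈ Set.Icc (-1:ℝ) 1) (g : ℝ → ℝ) (hgc : Continuous g)
    (hg0 : ∀ x, 0 ≤ g x) (hgi : Integrable g γ) :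
    Integrable (fun p : ℝ × ℝ => g (ρ*p.1 + Real.sqrt (1 - ρ^2)*p.2)) (Measure.prod γ γ)
    ∧ ∫ p : ℝ × ℝ, g (ρ*p.1 + Real.sqrt (1 - ρ^2)*p.2) ∂(Measure.prod γ γ)
        = ∫ z, g z ∂γ := by
  have hL : ∫⁻ p : ℝ × ℝ, ENNReal.ofReal (g (ρ*p.1 + Real.sqrt (1 - ρ^2)*p.2))
      ∂(Measure.prod γ γ) = ∫⁻ z, ENNReal.ofReal (g z) ∂γ :=
    lint_rot' hρ (fun z => ENNReal.ofReal (g z)) hgc.measurable.ennreal_ofReal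
  have hcm : Continuous fun p : ℝ × ℝ => g (ρ*p.1 + Real.sqrt (1 - ρ^2)*p.2) :=
    hgc.comp ((continuous_const.mul continuous_fst).add (continuous_const.mul continuous_snd))
  have hint : Integrable (fun p : ℝ × ℝ => g (ρ*p.1 + Real.sqrt (1 - ρ^2)*p.2))
      (Measure.prod γ γ) := by
    refine ⟨hcm.aestronglyMeasurable, ?_⟩
    rw [hasFiniteIntegral_iff_ofReal (Filter.Eventually.of_forall fun p => hg0 _), hL]
    exact (hasFiniteIntegral_iff_ofReal (Filter.Eventually.of_forall fun z => hg0 z)).mp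
      hgi.hasFiniteIntegral
  refine ⟨hint, ?_⟩
  rw [integral_eq_lintegral_of_nonneg_ae (Filter.Eventually.of_forall fun p => hg0 _)
      hcm.aestronglyMeasurable,
    integral_eq_lintegral_of_nonneg_ae (Filter.Eventually.of_forall fun z => hg0 z)
      hgc.aestronglyMeasurable,
    hL]

/-! ### Functions of the first coordinate -/

lemma map_fst_gauss : Measure.map Prod.fst (Measure.prod γ γ) = γ := by
  rw [Measure.map_fst_prod]
  simp

lemma int_fst (h : ℝ → ℝ) (hc : Continuous h) (hi : Integrable h γ) :
    Integrable (fun p : ℝ × ℝ => h p.1) (Measure.prod γ γ)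
    ∧ ∫ p : ℝ × ℝ, h p.1 ∂(Measure.prod γ γ) = ∫ z, h z ∂γ := by
  constructor
  · have := (integrable_map_measure (map_fst_gauss ▸ hi.aestronglyMeasurable)
      measurable_fst.aemeasurable).mp (by rwa [map_fst_gauss])
    exact this
  · conv_rhs => rw [← map_fst_gauss]
    rw [integral_map measurable_fst.aemeasurable
      (map_fst_gauss ▸ hc.aestronglyMeasurable)]

/-! ### Stein's identity for the standard Gaussian -/

lemma stein (β : ℝ) :
    ∫ z, logistic (β*z) * z ∂γ = β * ∫ z, logPartition'' (β*z) ∂γ := by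
  set c := (Real.sqrt (2*π))⁻¹ with hc
  set F : ℝ → ℝ := fun z => logistic (β*z) * pdfR z with hF
  set F' : ℝ → ℝ := fun z =>
    β * logPartition'' (β*z) * pdfR z - z * (logistic (β*z) * pdfR z) with hF'
  have hderiv : ∀ z : ℝ, HasDerivAt F (F' z) z := by
    intro z
    have hβ : HasDerivAt (fun x : ℝ => β * x) β z := by
      simpa using (hasDerivAt_id z).const_mul β
    have hσ : HasDerivAt (fun x : ℝ => logistic (β*x)) (logPartition'' (β*z) * β) z :=
      (hasDerivAt_logistic (β*z)).comp z hβ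
    have h1 : HasDerivAt (fun x : ℝ => -x^2/2) (-z) z := by
      have := ((hasDerivAt_pow 2 z).div_const 2).neg
      have e : (fun x : ℝ => -x^2/2) = -fun x => x^2/2 := by
        funext x; simp only [Pi.neg_apply]; ring
      rw [e]; refine this.congr_deriv ?_; norm_num
    have h2 : HasDerivAt (fun x : ℝ => c * Real.exp (-x^2/2))
        (c * (Real.exp (-z^2/2) * (-z))) z := (h1.exp).const_mul c
    have hpdf : HasDerivAt pdfR (-z * pdfR z) z := by
      have hfn : pdfR = fun x => c * Real.exp (-x^2/2) := funext pdfR_eq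
      rw [hfn]
      convert h2 using 1
      ring
    have := hσ.mul hpdf
    refine this.congr_deriv ?_
    simp only [hF']
    ring
  have intA : Integrable (fun z => β * logPartition'' (β*z) * pdfR z) volume := by
    refine (integrable_pdfR.const_mul |β|).mono'
      (Continuous.aestronglyMeasurable (by
        exact (continuous_const.mul (continuous_logPartition''.comp
          (continuous_const.mul continuous_id))).mul continuous_pdfR))
      (Filter.Eventually.of_forall fun z => ?_)
    have h1 := logPartition''_nonneg (β*z)
    have h2 := logPartition''_le_one (β*z)
    have h3 := pdfR_nonneg z
    rw [Real.norm_eq_abs, abs_mul, abs_mul, abs_of_nonneg h1, abs_of_nonneg h3, mul_assoc]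
    exact mul_le_mul_of_nonneg_left (by nlinarith [mul_nonneg (sub_nonneg.2 h2) h3]) (abs_nonneg β)
  have intB : Integrable (fun z => z * (logistic (β*z) * pdfR z)) volume := by
    refine integrable_mul_pdfR.abs.mono'
      (Continuous.aestronglyMeasurable (by
        exact continuous_id.mul ((continuous_logistic.comp
          (continuous_const.mul continuous_id)).mul continuous_pdfR)))
      (Filter.Eventually.of_forall fun z => ?_)
    have h1 := logistic_pos (β*z)
    have h2 := logistic_le_one (β*z)
    have h3 := pdfR_nonneg z
    rw [Real.norm_eq_abs, abs_mul, abs_mul, abs_of_nonneg (le_of_lt h1), abs_of_nonneg h3,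
      abs_mul, abs_of_nonneg h3]
    exact mul_le_mul_of_nonneg_left (by nlinarith [mul_nonneg (sub_nonneg.2 h2) h3]) (abs_nonneg z)
  have hFint : Integrable F' volume := intA.sub intB
  have htt : Tendsto (fun z : ℝ => c * Real.exp (-(z^2/2))) atTop (nhds 0) := by
    have h2 : Filter.Tendsto (fun z : ℝ => z^2/2) atTop atTop :=
      (tendsto_pow_atTop two_ne_zero).atTop_div_const (by norm_num)
    have h3 := Real.tendsto_exp_atBot.comp (tendsto_neg_atTop_atBot.comp h2)
    simpa using h3.const_mul c
  have hbnd : ∀ z : ℝ, ‖F z‖ ≤ c * Real.exp (-(z^2/2)) := by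
    intro z
    have h1 := logistic_pos (β*z)
    have h2 := logistic_le_one (β*z)
    have h3 := pdfR_nonneg z
    rw [Real.norm_eq_abs, abs_mul, abs_of_nonneg (le_of_lt h1), abs_of_nonneg h3, pdfR_eq,
      show -z^2/2 = -(z^2/2) by ring]
    exact mul_le_of_le_one_left (by positivity) h2
  have htop : Tendsto F atTop (nhds 0) := squeeze_zero_norm hbnd htt
  have hbot : Tendsto F atBot (nhds 0) := by
    refine squeeze_zero_norm hbnd ?_
    have hneg : Filter.Tendsto (fun z : ℝ => -z) atBot atTop := tendsto_neg_atBot_atTop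
    have := htt.comp hneg
    refine this.congr fun z => ?_
    simp [neg_sq]
  have hIic : ∫ x in Set.Iic (0:ℝ), F' x = F 0 - 0 :=
    integral_Iic_of_hasDerivAt_of_tendsto' (fun x _ => hderiv x) hFint.integrableOn hbot
  have hIoi : ∫ x in Set.Ioi (0:ℝ), F' x = 0 - F 0 :=
    integral_Ioi_of_hasDerivAt_of_tendsto' (fun x _ => hderiv x) hFint.integrableOn htop
  have htotal : ∫ x, F' x = 0 := by
    rw [← intervalIntegral.integral_Iic_add_Ioi (b := (0:ℝ)) hFint.integrableOn
      hFint.integrableOn, hIic, hIoi]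
    ring
  have hsplit : ∫ x, F' x = (∫ z, β * logPartition'' (β*z) * pdfR z)
      - ∫ z, z * (logistic (β*z) * pdfR z) := integral_sub intA intB
  have hkey : ∫ z, z * (logistic (β*z) * pdfR z)
      = ∫ z, β * logPartition'' (β*z) * pdfR z := by
    rw [hsplit] at htotal; linarith
  rw [integral_gauss (fun z => logistic (β*z) * z), integral_gauss (fun z => logPartition'' (β*z))]
  calc ∫ z, pdfR z * (logistic (β*z) * z)
      = ∫ z, z * (logistic (β*z) * pdfR z) := by congr 1; funext z; ring
    _ = ∫ z, β * logPartition'' (β*z) * pdfR z := hkey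
    _ = β * ∫ z, pdfR z * logPartition'' (β*z) := by
        rw [← integral_const_mul]; congr 1; funext z; ring

end Aux

/-- The expected KL divergence between conditional label distributions at correlated
Gaussian inputs equals `β²(1-ρ)·E[g''(βz)]` (identity in the proof of Lemma 17),
where `z` and `z'` are standard normals with correlation `ρ`, realized as
`z' = ρz + √(1-ρ²)·z⊥`. -/
theorem stmt12 (β ρ : ℝ) (hβ : 0 < β) (hρ : ρ ∈ Set.Icc (-1 : ℝ) 1) :
    ∫ w : ℝ × ℝ, klBernoulli (logistic (β * w.1))
        (logistic (β * (ρ * w.1 + Real.sqrt (1 - ρ ^ 2) * w.2)))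
      ∂((gaussianReal 0 1).prod (gaussianReal 0 1))
    = β ^ 2 * (1 - ρ) * ∫ z, logPartition'' (β * z) ∂(gaussianReal 0 1) := by
  have hkl : ∀ w : ℝ × ℝ, klBernoulli (logistic (β * w.1))
      (logistic (β * (ρ * w.1 + Real.sqrt (1 - ρ^2) * w.2)))
      = Gfun (β * (ρ * w.1 + Real.sqrt (1 - ρ^2) * w.2)) - Gfun (β * w.1)
        + (β * (1 - ρ)) * (logistic (β * w.1) * w.1)
        - (β * Real.sqrt (1 - ρ^2)) * (logistic (β * w.1) * w.2) := by
    intro w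
    rw [kl_eq]
    ring
  have hGint : Integrable (fun z : ℝ => Gfun (β * z)) (gaussianReal 0 1) := by
    have hdom : Integrable (fun z : ℝ => Real.log 2 + β * |z|) (gaussianReal 0 1) :=
      (integrable_const _).add (integrable_abs_gauss.const_mul β)
    refine hdom.mono' (Continuous.aestronglyMeasurable
      (continuous_Gfun.comp (continuous_const.mul continuous_id))) ?_
    refine Filter.Eventually.of_forall fun z => ?_
    rw [Real.norm_eq_abs, abs_of_nonneg (Gfun_nonneg _)]
    calc Gfun (β * z) ≤ Real.log 2 + |β * z| := Gfun_le _
      _ = Real.log 2 + β * |z| := by rw [abs_mul, abs_of_pos hβ]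
  have hGc : Continuous fun z : ℝ => Gfun (β * z) :=
    continuous_Gfun.comp (continuous_const.mul continuous_id)
  have hA := int_rot hρ (fun z => Gfun (β * z)) hGc (fun z => Gfun_nonneg _) hGint
  have hAint : Integrable (fun w : ℝ × ℝ => Gfun (β * (ρ * w.1 + Real.sqrt (1 - ρ^2) * w.2)))
      ((gaussianReal 0 1).prod (gaussianReal 0 1)) := hA.1
  have hAval : ∫ w : ℝ × ℝ, Gfun (β * (ρ * w.1 + Real.sqrt (1 - ρ^2) * w.2))
      ∂((gaussianReal 0 1).prod (gaussianReal 0 1)) = ∫ z, Gfun (β * z) ∂(gaussianReal 0 1) :=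
    hA.2
  have hB := int_fst (fun z => Gfun (β * z)) hGc hGint
  have hBint : Integrable (fun w : ℝ × ℝ => Gfun (β * w.1))
      ((gaussianReal 0 1).prod (gaussianReal 0 1)) := hB.1
  have hBval : ∫ w : ℝ × ℝ, Gfun (β * w.1) ∂((gaussianReal 0 1).prod (gaussianReal 0 1))
      = ∫ z, Gfun (β * z) ∂(gaussianReal 0 1) := hB.2
  have hCint1 : Integrable (fun z : ℝ => logistic (β * z) * z) (gaussianReal 0 1) := by
    refine integrable_abs_gauss.mono' (Continuous.aestronglyMeasurable
      ((continuous_logistic.comp (continuous_const.mul continuous_id)).mul continuous_id)) ?_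
    refine Filter.Eventually.of_forall fun z => ?_
    rw [Real.norm_eq_abs, abs_mul, abs_of_nonneg (le_of_lt (logistic_pos _))]
    exact mul_le_of_le_one_left (abs_nonneg z) (logistic_le_one _)
  have hC := int_fst (fun z => logistic (β * z) * z)
    ((continuous_logistic.comp (continuous_const.mul continuous_id)).mul continuous_id) hCint1
  have hCint : Integrable (fun w : ℝ × ℝ => logistic (β * w.1) * w.1)
      ((gaussianReal 0 1).prod (gaussianReal 0 1)) := hC.1
  have hCval : ∫ w : ℝ × ℝ, logistic (β * w.1) * w.1
      ∂((gaussianReal 0 1).prod (gaussianReal 0 1))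
      = ∫ z, logistic (β * z) * z ∂(gaussianReal 0 1) := hC.2
  have hσint : Integrable (fun z : ℝ => logistic (β * z)) (gaussianReal 0 1) := by
    refine (integrable_const (1:ℝ)).mono' (Continuous.aestronglyMeasurable
      (continuous_logistic.comp (continuous_const.mul continuous_id))) ?_
    refine Filter.Eventually.of_forall fun z => ?_
    rw [Real.norm_eq_abs, abs_of_nonneg (le_of_lt (logistic_pos _))]
    exact logistic_le_one _
  have hDint : Integrable (fun w : ℝ × ℝ => logistic (β * w.1) * w.2)
      ((gaussianReal 0 1).prod (gaussianReal 0 1)) :=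
    hσint.mul_prod integrable_id_gauss
  have hDval : ∫ w : ℝ × ℝ, logistic (β * w.1) * w.2
      ∂((gaussianReal 0 1).prod (gaussianReal 0 1)) = 0 := by
    rw [integral_prod_mul (fun z => logistic (β * z)) (fun z => z), integral_id_gauss, mul_zero]
  -- split the integral
  have h1 : Integrable (fun w : ℝ × ℝ =>
      Gfun (β * (ρ * w.1 + Real.sqrt (1 - ρ^2) * w.2)) - Gfun (β * w.1)
        + (β * (1 - ρ)) * (logistic (β * w.1) * w.1))
      ((gaussianReal 0 1).prod (gaussianReal 0 1)) :=
    (hAint.sub hBint).add (hCint.const_mul _)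
  have h2 : Integrable (fun w : ℝ × ℝ =>
      (β * Real.sqrt (1 - ρ^2)) * (logistic (β * w.1) * w.2))
      ((gaussianReal 0 1).prod (gaussianReal 0 1)) := hDint.const_mul _
  have h3 : Integrable (fun w : ℝ × ℝ =>
      Gfun (β * (ρ * w.1 + Real.sqrt (1 - ρ^2) * w.2)) - Gfun (β * w.1))
      ((gaussianReal 0 1).prod (gaussianReal 0 1)) := hAint.sub hBint
  have h4 : Integrable (fun w : ℝ × ℝ =>
      (β * (1 - ρ)) * (logistic (β * w.1) * w.1))
      ((gaussianReal 0 1).prod (gaussianReal 0 1)) := hCint.const_mul _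
  calc ∫ w : ℝ × ℝ, klBernoulli (logistic (β * w.1))
        (logistic (β * (ρ * w.1 + Real.sqrt (1 - ρ ^ 2) * w.2)))
        ∂((gaussianReal 0 1).prod (gaussianReal 0 1))
      = ∫ w : ℝ × ℝ, (Gfun (β * (ρ * w.1 + Real.sqrt (1 - ρ^2) * w.2)) - Gfun (β * w.1)
          + (β * (1 - ρ)) * (logistic (β * w.1) * w.1)
          - (β * Real.sqrt (1 - ρ^2)) * (logistic (β * w.1) * w.2))
          ∂((gaussianReal 0 1).prod (gaussianReal 0 1)) := by
        exact integral_congr_ae (Filter.Eventually.of_forall fun w => hkl w)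
    _ = (∫ w : ℝ × ℝ, Gfun (β * (ρ * w.1 + Real.sqrt (1 - ρ^2) * w.2))
            ∂((gaussianReal 0 1).prod (gaussianReal 0 1)))
        - (∫ w : ℝ × ℝ, Gfun (β * w.1) ∂((gaussianReal 0 1).prod (gaussianReal 0 1)))
        + (β * (1 - ρ)) * (∫ w : ℝ × ℝ, logistic (β * w.1) * w.1
            ∂((gaussianReal 0 1).prod (gaussianReal 0 1)))
        - (β * Real.sqrt (1 - ρ^2)) * (∫ w : ℝ × ℝ, logistic (β * w.1) * w.2
            ∂((gaussianReal 0 1).prod (gaussianReal 0 1))) := by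
        rw [integral_sub h1 h2, integral_add h3 h4, integral_sub hAint hBint,
          integral_const_mul, integral_const_mul]
    _ = β ^ 2 * (1 - ρ) * ∫ z, logPartition'' (β * z) ∂(gaussianReal 0 1) := by
        rw [hAval, hBval, hCval, hDval, stein β]
        ring
end

section
/- Let z be a standard normal random variable and β > 0. Then E[ g'(−β|z|) ] ≤ min{ 1/2, 1/2 − (β/4)·√(2/π)·(1 − β²/6), (1/β)·√(2/π) }, where g'(η) = 1/(1+e^{−η}). -/
open MeasureTheory ProbabilityTheory Real

section aux
open Set Filter
open scoped ENNReal NNReal Topology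


lemma gauss_int_eq (f : ℝ → ℝ) :
    ∫ x, f x ∂(gaussianReal 0 1) = ∫ x, gaussianPDFReal 0 1 x * f x := by
  rw [gaussianReal_of_var_ne_zero 0 one_ne_zero]
  rw [show gaussianPDF 0 1 = fun x => ((gaussianPDFReal 0 1 x).toNNReal : ℝ≥0∞) from rfl]
  rw [integral_withDensity_eq_integral_smul
    ((measurable_gaussianPDFReal 0 1).real_toNNReal) f]
  congr 1; ext x
  rw [NNReal.smul_def, smul_eq_mul, Real.coe_toNNReal _ (gaussianPDFReal_nonneg 0 1 x)]

lemma gauss_integrable_iff (f : ℝ → ℝ) :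
    Integrable f (gaussianReal 0 1) ↔ Integrable (fun x => gaussianPDFReal 0 1 x * f x) := by
  rw [gaussianReal_of_var_ne_zero 0 one_ne_zero]
  rw [show gaussianPDF 0 1 = fun x => ((gaussianPDFReal 0 1 x).toNNReal : ℝ≥0∞) from rfl]
  rw [integrable_withDensity_iff_integrable_smul
    ((measurable_gaussianPDFReal 0 1).real_toNNReal)]
  constructor <;> intro h <;> refine h.congr (Filter.Eventually.of_forall fun x => ?_) <;>
    simp [NNReal.smul_def, Real.coe_toNNReal _ (gaussianPDFReal_nonneg 0 1 x)]

lemma pdf_eq (x : ℝ) : gaussianPDFReal 0 1 x = (Real.sqrt (2 * π))⁻¹ * Real.exp (-x ^ 2 / 2) := by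
  simp [gaussianPDFReal]

lemma integrable_comp_abs {f : ℝ → ℝ} (hf : IntegrableOn f (Set.Ioi (0:ℝ))) :
    Integrable (fun x => f |x|) := by
  have hf' : IntegrableOn (fun x => f |x|) (Set.Ioi (0:ℝ)) :=
    hf.congr_fun (fun x hx => by rw [abs_eq_self.mpr (le_of_lt hx)]) measurableSet_Ioi
  have int_Iic : IntegrableOn (fun x ↦ f |x|) (Iic 0) := by
    rw [← Measure.map_neg_eq_self (volume : Measure ℝ)]
    let m : MeasurableEmbedding fun x : ℝ => -x := (Homeomorph.neg ℝ).measurableEmbedding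
    rw [m.integrableOn_map_iff]
    simp_rw [Function.comp_def, abs_neg, neg_preimage, neg_Iic, neg_zero]
    exact (integrableOn_Ici_iff_integrableOn_Ioi).mpr hf'
  rw [← integrableOn_univ, ← Set.Iic_union_Ioi (a := (0:ℝ))]
  exact int_Iic.union hf'

lemma expdecay (β : ℝ) (hβ : 0 < β) :
    Tendsto (fun x : ℝ => -β⁻¹ * Real.exp (-β * x)) atTop (𝓝 0) := by
  have h : Tendsto (fun x : ℝ => Real.exp (-β * x)) atTop (𝓝 0) := by
    refine (tendsto_exp_neg_atTop_nhds_zero.comp (Tendsto.const_mul_atTop hβ tendsto_id)).congr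
      (fun x => by simp [Function.comp, neg_mul])
  simpa using h.const_mul (-β⁻¹)

lemma deriv_exp_beta (β x : ℝ) (hb : β ≠ 0) :
    HasDerivAt (fun x : ℝ => -β⁻¹ * Real.exp (-β * x)) (Real.exp (-β * x)) x := by
  have h : HasDerivAt (fun x : ℝ => -β * x) (-β) x := by
    simpa using (hasDerivAt_id x).const_mul (-β)
  exact ((h.exp).const_mul (-β⁻¹)).congr_deriv (by field_simp)

lemma ftc_exp (β : ℝ) (hβ : 0 < β) :
    IntegrableOn (fun x : ℝ => Real.exp (-β * x)) (Set.Ioi 0) ∧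
      ∫ x in Set.Ioi (0:ℝ), Real.exp (-β * x) = 1 / β := by
  have hderiv : ∀ x ∈ Ici (0:ℝ), HasDerivAt (fun x : ℝ => -β⁻¹ * Real.exp (-β * x))
      (Real.exp (-β * x)) x := fun x _ => deriv_exp_beta β x (ne_of_gt hβ)
  have hpos : ∀ x ∈ Ioi (0:ℝ), 0 ≤ Real.exp (-β * x) := fun x _ => (Real.exp_pos _).le
  refine ⟨integrableOn_Ioi_deriv_of_nonneg' hderiv hpos (expdecay β hβ), ?_⟩
  rw [integral_Ioi_of_hasDerivAt_of_nonneg' hderiv hpos (expdecay β hβ)]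
  simp [Real.exp_zero]

lemma sq_half_atTop : Tendsto (fun x : ℝ => x ^ 2 / 2) atTop atTop :=
  (tendsto_pow_atTop two_ne_zero).atTop_div_const (by norm_num)

lemma deriv_negsq (x : ℝ) : HasDerivAt (fun x : ℝ => -x ^ 2 / 2) (-x) x := by
  have := ((hasDerivAt_pow 2 x).neg.div_const 2)
  exact this.congr_deriv (by norm_num; ring)

lemma ftc1 :
    IntegrableOn (fun x : ℝ => x * Real.exp (-x ^ 2 / 2)) (Set.Ioi 0) ∧
      ∫ x in Set.Ioi (0:ℝ), x * Real.exp (-x ^ 2 / 2) = 1 := by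
  have hderiv : ∀ x ∈ Ici (0:ℝ), HasDerivAt (fun x : ℝ => -Real.exp (-x ^ 2 / 2))
      (x * Real.exp (-x ^ 2 / 2)) x := by
    intro x _
    exact ((deriv_negsq x).exp).neg.congr_deriv (by ring)
  have hpos : ∀ x ∈ Ioi (0:ℝ), 0 ≤ x * Real.exp (-x ^ 2 / 2) :=
    fun x hx => mul_nonneg (le_of_lt hx) (Real.exp_pos _).le
  have htend : Tendsto (fun x : ℝ => -Real.exp (-x ^ 2 / 2)) atTop (𝓝 0) := by
    have := (tendsto_exp_neg_atTop_nhds_zero.comp sq_half_atTop).neg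
    simpa [Function.comp, neg_div] using this
  refine ⟨integrableOn_Ioi_deriv_of_nonneg' hderiv hpos htend, ?_⟩
  rw [integral_Ioi_of_hasDerivAt_of_nonneg' hderiv hpos htend]
  norm_num

lemma ftc3 :
    IntegrableOn (fun x : ℝ => x ^ 3 * Real.exp (-x ^ 2 / 2)) (Set.Ioi 0) ∧
      ∫ x in Set.Ioi (0:ℝ), x ^ 3 * Real.exp (-x ^ 2 / 2) = 2 := by
  have hderiv : ∀ x ∈ Ici (0:ℝ), HasDerivAt (fun x : ℝ => -(x ^ 2 + 2) * Real.exp (-x ^ 2 / 2))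
      (x ^ 3 * Real.exp (-x ^ 2 / 2)) x := by
    intro x _
    have h1 : HasDerivAt (fun x : ℝ => -(x ^ 2 + 2)) (-(2 * x)) x := by
      exact ((hasDerivAt_pow 2 x).add_const 2).neg.congr_deriv (by norm_num)
    exact (h1.mul ((deriv_negsq x).exp)).congr_deriv (by ring)
  have hpos : ∀ x ∈ Ioi (0:ℝ), 0 ≤ x ^ 3 * Real.exp (-x ^ 2 / 2) :=
    fun x hx => mul_nonneg (pow_nonneg (le_of_lt hx) 3) (Real.exp_pos _).le
  have htend : Tendsto (fun x : ℝ => -(x ^ 2 + 2) * Real.exp (-x ^ 2 / 2)) atTop (𝓝 0) := by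
    have h1 : Tendsto (fun u : ℝ => -(2 * u + 2) * Real.exp (-u)) atTop (𝓝 0) := by
      have ha := tendsto_pow_mul_exp_neg_atTop_nhds_zero 1
      have hb := tendsto_exp_neg_atTop_nhds_zero
      have key := ((ha.const_mul (-2 : ℝ)).add (hb.const_mul (-2 : ℝ)))
      simp only [mul_zero, add_zero, pow_one, zero_add] at key
      refine key.congr fun u => by ring
    have := h1.comp sq_half_atTop
    refine this.congr fun x => ?_
    simp only [Function.comp]
    ring_nf
  refine ⟨integrableOn_Ioi_deriv_of_nonneg' hderiv hpos htend, ?_⟩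
  rw [integral_Ioi_of_hasDerivAt_of_nonneg' hderiv hpos htend]
  norm_num

lemma nonneg_of_deriv {f f' : ℝ → ℝ} (hd : ∀ x, HasDerivAt f (f' x) x) (h0 : f 0 = 0)
    (hpos : ∀ x, 0 ≤ x → 0 ≤ f' x) : ∀ x, 0 ≤ x → 0 ≤ f x := by
  intro x hx
  have hmono : MonotoneOn f (Set.Ici 0) := by
    refine monotoneOn_of_deriv_nonneg (convex_Ici 0) ?_ ?_ ?_
    · exact Continuous.continuousOn (continuous_iff_continuousAt.2 fun y => (hd y).continuousAt)
    · exact fun y _ => (hd y).differentiableAt.differentiableWithinAt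
    · intro y hy
      rw [interior_Ici] at hy
      rw [(hd y).deriv]
      exact hpos y (le_of_lt hy)
  have := hmono (self_mem_Ici) hx hx
  rwa [h0] at this

lemma G_nonneg : ∀ t : ℝ, 0 ≤ t → 0 ≤ t * (Real.exp t + 1) - 2 * (Real.exp t - 1) := by
  have hd' : ∀ t : ℝ, HasDerivAt (fun t => Real.exp t + 1 + t * Real.exp t - 2 * Real.exp t)
      (t * Real.exp t) t := by
    intro t
    have h1 := ((Real.hasDerivAt_exp t).add_const 1).add
      ((hasDerivAt_id t).mul (Real.hasDerivAt_exp t))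
    have h2 := h1.sub ((Real.hasDerivAt_exp t).const_mul 2)
    exact h2.congr_deriv (by simp only [id_eq, one_mul]; ring)
  have hG' : ∀ t : ℝ, 0 ≤ t → 0 ≤ Real.exp t + 1 + t * Real.exp t - 2 * Real.exp t := by
    refine nonneg_of_deriv hd' (by norm_num) ?_
    exact fun t ht => mul_nonneg ht (Real.exp_pos t).le
  have hd : ∀ t : ℝ, HasDerivAt (fun t => t * (Real.exp t + 1) - 2 * (Real.exp t - 1))
      (Real.exp t + 1 + t * Real.exp t - 2 * Real.exp t) t := by
    intro t
    have h1 := ((hasDerivAt_id t).mul ((Real.hasDerivAt_exp t).add_const 1)).sub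
      (((Real.hasDerivAt_exp t).sub_const 1).const_mul 2)
    exact h1.congr_deriv (by simp only [id_eq, one_mul])
  exact nonneg_of_deriv hd (by norm_num) hG'

lemma key_ineq : ∀ t : ℝ, 0 ≤ t → 1 / (1 + Real.exp t) ≤ 1 / 2 - t / 4 + t ^ 3 / 48 := by
  have hd : ∀ t : ℝ, HasDerivAt (fun t => 1 / 2 - t / 4 + t ^ 3 / 48 - 1 / (1 + Real.exp t))
      (-(1 / 4) + 3 * t ^ 2 / 48 + Real.exp t / (1 + Real.exp t) ^ 2) t := by
    intro t
    have he : (1 : ℝ) + Real.exp t ≠ 0 := by positivity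
    have h1 : HasDerivAt (fun t : ℝ => 1 / 2 - t / 4 + t ^ 3 / 48)
        (-(1 / 4) + 3 * t ^ 2 / 48) t := by
      have := (((hasDerivAt_id t).div_const 4).const_sub (1/2)).add
        ((hasDerivAt_pow 3 t).div_const 48)
      exact this.congr_deriv (by norm_num)
    have h2 : HasDerivAt (fun t : ℝ => 1 / (1 + Real.exp t))
        (-(Real.exp t / (1 + Real.exp t) ^ 2)) t := by
      have := ((Real.hasDerivAt_exp t).const_add 1).inv he
      simp only [one_div]
      exact this.congr_deriv (by field_simp)
    have h3 := h1.sub h2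
    exact h3.congr_deriv (by ring)
  have hpos : ∀ t : ℝ, 0 ≤ t →
      0 ≤ -(1 / 4) + 3 * t ^ 2 / 48 + Real.exp t / (1 + Real.exp t) ^ 2 := by
    intro t ht
    have hG := G_nonneg t ht
    have he1 : (1 : ℝ) ≤ Real.exp t := Real.one_le_exp ht
    have he : (0 : ℝ) < 1 + Real.exp t := by positivity
    have h2 : 0 ≤ t * (1 + Real.exp t) + 2 * (Real.exp t - 1) := by nlinarith
    have hq : 0 ≤ (t * (1 + Real.exp t)) ^ 2 - (2 * (Real.exp t - 1)) ^ 2 := by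
      nlinarith [mul_nonneg hG h2]
    have heq : -(1 / 4) + 3 * t ^ 2 / 48 + Real.exp t / (1 + Real.exp t) ^ 2 =
        ((t * (1 + Real.exp t)) ^ 2 - (2 * (Real.exp t - 1)) ^ 2) /
          (16 * (1 + Real.exp t) ^ 2) := by
      field_simp
      ring
    rw [heq]
    exact div_nonneg hq (by positivity)
  have h0 : (fun t => 1 / 2 - t / 4 + t ^ 3 / 48 - 1 / (1 + Real.exp t)) 0 = 0 := by
    norm_num
  intro t ht
  have := nonneg_of_deriv hd h0 hpos t ht
  linarith

lemma sqrt2pi_pos : 0 < Real.sqrt (2 * π) := Real.sqrt_pos.2 (by positivity)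

lemma two_mul_inv_sqrt : (Real.sqrt (2 * π))⁻¹ * 2 = Real.sqrt (2 / π) := by
  have hπ : (0:ℝ) < π := pi_pos
  rw [inv_mul_eq_div, div_eq_iff (ne_of_gt sqrt2pi_pos), ← Real.sqrt_mul (by positivity)]
  rw [show 2 / π * (2 * π) = 4 by field_simp; ring, show (4:ℝ) = 2 ^ 2 by norm_num,
    Real.sqrt_sq (by norm_num)]

lemma logistic_eq (t : ℝ) : logistic (-t) = 1 / (1 + Real.exp t) := by
  simp [logistic, neg_neg]

lemma logistic_nonneg (η : ℝ) : 0 ≤ logistic η := by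
  unfold logistic; positivity

end aux

section main
open Set Filter
open scoped ENNReal NNReal Topology

/-- Gaussian integral bound (Lemma 14): for `z ~ N(0,1)` and `β > 0`,
`E[g'(-β|z|)] ≤ min{1/2, 1/2 - (β/4)√(2/π)(1 - β²/6), (1/β)√(2/π)}`. -/
theorem stmt14 (β : ℝ) (hβ : 0 < β) :
    ∫ z, logistic (-β * |z|) ∂(gaussianReal 0 1)
      ≤ min (1 / 2) (min (1 / 2 - β / 4 * Real.sqrt (2 / π) * (1 - β ^ 2 / 6))
          ((1 / β) * Real.sqrt (2 / π))) := by
  have hπ : (0:ℝ) < π := pi_pos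
  set c := (Real.sqrt (2 * π))⁻¹ with hc
  have hc0 : 0 < c := inv_pos.2 sqrt2pi_pos
  have htwo : c * 2 = Real.sqrt (2 / π) := two_mul_inv_sqrt
  have habs : ∀ z : ℝ, 0 ≤ β * |z| := fun z => mul_nonneg hβ.le (abs_nonneg z)
  have hfz : ∀ z : ℝ, logistic (-β * |z|) = 1 / (1 + Real.exp (β * |z|)) := by
    intro z; rw [show -β * |z| = -(β * |z|) by ring, logistic_eq]
  have hnonneg : ∀ z : ℝ, 0 ≤ logistic (-β * |z|) := fun z => logistic_nonneg _
  have hexp1 : ∀ z : ℝ, (1:ℝ) ≤ Real.exp (β * |z|) := fun z => Real.one_le_exp (habs z)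
  -- Bound 1
  have hb1 : ∫ z, logistic (-β * |z|) ∂(gaussianReal 0 1) ≤ 1 / 2 := by
    have h := integral_mono_of_nonneg (μ := gaussianReal 0 1)
      (Filter.Eventually.of_forall hnonneg) (integrable_const (1/2 : ℝ))
      (Filter.Eventually.of_forall fun z => by
        dsimp only
        rw [hfz z, div_le_div_iff₀ (by positivity) (by norm_num)]
        linarith [hexp1 z])
    simpa using h
  -- Bound 3
  have hb3 : ∫ z, logistic (-β * |z|) ∂(gaussianReal 0 1) ≤ (1 / β) * Real.sqrt (2 / π) := by
    have hmeas : AEStronglyMeasurable (fun z : ℝ => Real.exp (-β * |z|)) (gaussianReal 0 1) :=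
      (Real.continuous_exp.comp (continuous_const.mul continuous_abs)).aestronglyMeasurable
    have hie : Integrable (fun z : ℝ => Real.exp (-β * |z|)) (gaussianReal 0 1) := by
      refine (integrable_const (1:ℝ)).mono' hmeas (Filter.Eventually.of_forall fun z => ?_)
      rw [Real.norm_eq_abs, abs_of_pos (Real.exp_pos _)]
      exact Real.exp_le_one_iff.2 (by nlinarith [abs_nonneg z])
    have step1 : ∫ z, logistic (-β * |z|) ∂(gaussianReal 0 1)
        ≤ ∫ z, Real.exp (-β * |z|) ∂(gaussianReal 0 1) := by
      refine integral_mono_of_nonneg (Filter.Eventually.of_forall hnonneg) hie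
        (Filter.Eventually.of_forall fun z => ?_)
      dsimp only
      rw [hfz z, show -β * |z| = -(β * |z|) by ring, Real.exp_neg, ← one_div]
      exact one_div_le_one_div_of_le (Real.exp_pos _) (by linarith [Real.exp_pos (β * |z|)])
    have hint : Integrable (fun x : ℝ => Real.exp (-β * |x|)) :=
      integrable_comp_abs (ftc_exp β hβ).1
    have step2 : ∫ z, Real.exp (-β * |z|) ∂(gaussianReal 0 1)
        ≤ ∫ z : ℝ, c * Real.exp (-β * |z|) := by
      rw [gauss_int_eq]
      refine integral_mono_of_nonneg (Filter.Eventually.of_forall fun z =>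
        mul_nonneg (gaussianPDFReal_nonneg 0 1 z) (Real.exp_pos _).le)
        (hint.const_mul c) (Filter.Eventually.of_forall fun z => ?_)
      dsimp only
      rw [pdf_eq]
      have : Real.exp (-z ^ 2 / 2) ≤ 1 := Real.exp_le_one_iff.2 (by nlinarith [sq_nonneg z])
      calc c * Real.exp (-z ^ 2 / 2) * Real.exp (-β * |z|)
          ≤ c * 1 * Real.exp (-β * |z|) := by
            apply mul_le_mul_of_nonneg_right _ (Real.exp_pos _).le
            exact mul_le_mul_of_nonneg_left this hc0.le
        _ = c * Real.exp (-β * |z|) := by ring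
    have step3 : ∫ z : ℝ, c * Real.exp (-β * |z|) = (1 / β) * Real.sqrt (2 / π) := by
      rw [integral_const_mul, integral_comp_abs (f := fun x => Real.exp (-β * x)),
        (ftc_exp β hβ).2]
      rw [show c * (2 * (1 / β)) = c * 2 * (1 / β) by ring, htwo]
      ring
    linarith
  -- Bound 2
  have hb2 : ∫ z, logistic (-β * |z|) ∂(gaussianReal 0 1)
      ≤ 1 / 2 - β / 4 * Real.sqrt (2 / π) * (1 - β ^ 2 / 6) := by
    have h1 : Integrable (fun z : ℝ => |z|) (gaussianReal 0 1) := by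
      refine (gauss_integrable_iff _).2 ?_
      have h := integrable_comp_abs (f := fun t => c * (t * Real.exp (-t ^ 2 / 2)))
        ((ftc1.1).const_mul c)
      refine h.congr (Filter.Eventually.of_forall fun x => ?_)
      dsimp only
      rw [pdf_eq, ← sq_abs x]
      ring
    have h3 : Integrable (fun z : ℝ => |z| ^ 3) (gaussianReal 0 1) := by
      refine (gauss_integrable_iff _).2 ?_
      have h := integrable_comp_abs (f := fun t => c * (t ^ 3 * Real.exp (-t ^ 2 / 2)))
        ((ftc3.1).const_mul c)
      refine h.congr (Filter.Eventually.of_forall fun x => ?_)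
      dsimp only
      rw [pdf_eq, ← sq_abs x]
      ring
    have hg : Integrable (fun z : ℝ => 1 / 2 - β / 4 * |z| + β ^ 3 / 48 * |z| ^ 3)
        (gaussianReal 0 1) :=
      ((integrable_const (1/2 : ℝ)).sub (h1.const_mul (β / 4))).add (h3.const_mul (β ^ 3 / 48))
    have hstep : ∫ z, logistic (-β * |z|) ∂(gaussianReal 0 1)
        ≤ ∫ z, (1 / 2 - β / 4 * |z| + β ^ 3 / 48 * |z| ^ 3) ∂(gaussianReal 0 1) := by
      refine integral_mono_of_nonneg (Filter.Eventually.of_forall hnonneg) hg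
        (Filter.Eventually.of_forall fun z => ?_)
      have := key_ineq (β * |z|) (habs z)
      dsimp only
      rw [hfz z]
      calc 1 / (1 + Real.exp (β * |z|)) ≤ 1 / 2 - β * |z| / 4 + (β * |z|) ^ 3 / 48 := this
        _ = 1 / 2 - β / 4 * |z| + β ^ 3 / 48 * |z| ^ 3 := by ring
    have hM1 : ∫ z : ℝ, |z| ∂(gaussianReal 0 1) = Real.sqrt (2 / π) := by
      rw [gauss_int_eq]
      have : (fun x : ℝ => gaussianPDFReal 0 1 x * |x|)
          = fun x => c * (|x| * Real.exp (-|x| ^ 2 / 2)) := by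
        funext x; rw [pdf_eq, ← sq_abs x]; ring
      rw [this, integral_comp_abs (f := fun t => c * (t * Real.exp (-t ^ 2 / 2))),
        integral_const_mul, ftc1.2]
      rw [mul_one, mul_comm, htwo]
    have hM3 : ∫ z : ℝ, |z| ^ 3 ∂(gaussianReal 0 1) = 2 * Real.sqrt (2 / π) := by
      rw [gauss_int_eq]
      have : (fun x : ℝ => gaussianPDFReal 0 1 x * |x| ^ 3)
          = fun x => c * (|x| ^ 3 * Real.exp (-|x| ^ 2 / 2)) := by
        funext x; rw [pdf_eq, ← sq_abs x]; ring
      rw [this, integral_comp_abs (f := fun t => c * (t ^ 3 * Real.exp (-t ^ 2 / 2))),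
        integral_const_mul, ftc3.2]
      rw [show (2 : ℝ) * (c * 2) = c * 2 * 2 by ring, htwo]
      ring
    have hsplit : ∫ z, (1 / 2 - β / 4 * |z| + β ^ 3 / 48 * |z| ^ 3) ∂(gaussianReal 0 1)
        = 1 / 2 - β / 4 * Real.sqrt (2 / π) + β ^ 3 / 48 * (2 * Real.sqrt (2 / π)) := by
      have hA : Integrable (fun z : ℝ => 1 / 2 - β / 4 * |z|) (gaussianReal 0 1) :=
        (integrable_const _).sub (h1.const_mul _)
      rw [integral_add hA (h3.const_mul _), integral_sub (integrable_const _) (h1.const_mul _),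
        integral_const_mul, integral_const_mul, hM1, hM3]
      simp
    rw [hsplit] at hstep
    calc ∫ z, logistic (-β * |z|) ∂(gaussianReal 0 1)
        ≤ 1 / 2 - β / 4 * Real.sqrt (2 / π) + β ^ 3 / 48 * (2 * Real.sqrt (2 / π)) := hstep
      _ = 1 / 2 - β / 4 * Real.sqrt (2 / π) * (1 - β ^ 2 / 6) := by ring
  exact le_min hb1 (le_min hb2 hb3)


end main
end
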